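/- Let 1 ∈ A ⊂ B be an inclusion of unital C*-algebras and E : B → A a faithful conditional expectation of index-finite type. If A is simple, then for every non-zero projection p ∈ A the conditional expectation F_p = E|_{pBp} : pBp → pAp is of index-finite type. -/

import Mathlib

/-- `E : B → B` is a conditional expectation onto the unital C*-subalgebra `A` of `B`:
it is an `A`-bimodule projection onto `A`, star-preserving and positive. -/
def IsCondExp {B : Type*} [CStarAlgebra B] (A : StarSubalgebra ℂ B) (E : B →ₗ[ℂ] B) : Prop :=
  (∀ b : B, E b ∈ A) ∧ (∀ a ∈ A, E a = a) ∧
  (∀ a ∈ A, ∀ b : B, ∀ c ∈ A, E (a * b * c) = a * E b * c) ∧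
  (∀ b : B, E (star b) = star (E b)) ∧ (∀ b : B, ∃ x : B, E (star b * b) = star x * x)

/-- `E` is faithful. -/
def IsFaithful {B : Type*} [CStarAlgebra B] (E : B →ₗ[ℂ] B) : Prop :=
  ∀ b : B, E (star b * b) = 0 → b = 0

/-- `{(vᵢ, vᵢ*)}` is a quasi-basis for `E`: every `x` satisfies
`x = ∑ vᵢ E(vᵢ* x) = ∑ E(x vᵢ) vᵢ*`.  In particular `E` is of index-finite type. -/
def IsQuasiBasis {B : Type*} [CStarAlgebra B] (E : B →ₗ[ℂ] B) {n : ℕ} (v : Fin n → B) : Prop :=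
  ∀ b : B, (∑ i, v i * E (star (v i) * b)) = b ∧ (∑ i, E (b * v i) * star (v i)) = b

/-- A C*-algebra is simple: it has no nontrivial closed two-sided ideals. -/
def IsSimpleCStar (R : Type*) [NonUnitalNonAssocRing R] [TopologicalSpace R] : Prop :=
  ∀ I : TwoSidedIdeal R, IsClosed (I : Set R) → I = ⊥ ∨ I = ⊤


section AuxCondExp


section Cont
variable {B : Type*} [CStarAlgebra B] [Nontrivial B] {A : StarSubalgebra ℂ B} {E : B →ₗ[ℂ] B}

theorem IsCondExp.norm_le_sa (hE : IsCondExp A E) (b : B) (hb : IsSelfAdjoint b) :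
    ‖E b‖ ≤ 3 * ‖b‖ := by
  letI := CStarAlgebra.spectralOrder B
  haveI := CStarAlgebra.spectralOrderedRing B
  obtain ⟨mem, fix, bimod, hstar, pos⟩ := hE
  have hpos : ∀ y : B, 0 ≤ y → 0 ≤ E y := by
    intro y hy
    obtain ⟨x, hx⟩ := pos (CFC.sqrt y)
    have h1 : star (CFC.sqrt y) * CFC.sqrt y = y := by
      rw [(IsSelfAdjoint.of_nonneg (CFC.sqrt_nonneg y)).star_eq, CFC.sqrt_mul_sqrt_self y hy]
    rw [← h1, hx]
    exact star_mul_self_nonneg x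
  have hmono : ∀ x y : B, x ≤ y → E x ≤ E y := by
    intro x y h
    have := hpos (y - x) (sub_nonneg.2 h)
    rw [map_sub] at this
    exact sub_nonneg.1 this
  have hfixr : ∀ r : ℝ, E (algebraMap ℝ B r) = algebraMap ℝ B r := by
    intro r
    refine fix _ ?_
    have : algebraMap ℝ B r = (r : ℂ) • (1 : B) := by
      rw [Algebra.algebraMap_eq_smul_one]
      norm_num
    rw [this]
    exact SMulMemClass.smul_mem _ (one_mem A)
  have hub : E b ≤ algebraMap ℝ B ‖b‖ := by
    have := hmono b (algebraMap ℝ B ‖b‖) hb.le_algebraMap_norm_self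
    rwa [hfixr] at this
  have hlb : - algebraMap ℝ B ‖b‖ ≤ E b := by
    have := hmono (- algebraMap ℝ B ‖b‖) b hb.neg_algebraMap_norm_le_self
    rwa [map_neg, hfixr] at this
  have hx0 : (0 : B) ≤ E b + algebraMap ℝ B ‖b‖ := by
    have := add_le_add hlb (le_refl (algebraMap ℝ B ‖b‖))
    simpa using this
  have hx2 : E b + algebraMap ℝ B ‖b‖ ≤ algebraMap ℝ B (2 * ‖b‖) := by
    have := add_le_add hub (le_refl (algebraMap ℝ B ‖b‖))
    rw [two_mul, map_add]
    exact this
  have hn2 : ‖E b + algebraMap ℝ B ‖b‖‖ ≤ 2 * ‖b‖ := by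
    refine (CStarAlgebra.norm_le_iff_le_algebraMap _ (by positivity) hx0).2 hx2
  calc ‖E b‖ = ‖E b + algebraMap ℝ B ‖b‖ - algebraMap ℝ B ‖b‖‖ := by rw [add_sub_cancel_right]
    _ ≤ ‖E b + algebraMap ℝ B ‖b‖‖ + ‖algebraMap ℝ B ‖b‖‖ := norm_sub_le _ _
    _ ≤ 2 * ‖b‖ + ‖b‖ := by
        refine add_le_add hn2 ?_
        rw [norm_algebraMap']
        simp
    _ = 3 * ‖b‖ := by ring

theorem IsCondExp.continuous (hE : IsCondExp A E) : Continuous E := by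
  refine AddMonoidHomClass.continuous_of_bound E 6 fun b => ?_
  obtain ⟨re, hre⟩ : ∃ re : B, re = (2 : ℂ)⁻¹ • (b + star b) := ⟨_, rfl⟩
  obtain ⟨im, him⟩ : ∃ im : B, im = (2 * Complex.I)⁻¹ • (b - star b) := ⟨_, rfl⟩
  have hre_sa : IsSelfAdjoint re := by
    rw [IsSelfAdjoint, hre, star_smul, star_add, star_star]
    simp [add_comm]
  have him_sa : IsSelfAdjoint im := by
    rw [IsSelfAdjoint, him, star_smul, star_sub, star_star]
    rw [show star (2 * Complex.I : ℂ)⁻¹ = (-(2 * Complex.I))⁻¹ by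
      rw [star_inv₀]; congr 1; simp [star_mul', Complex.conj_I]]
    rw [inv_neg, neg_smul, smul_sub, smul_sub, neg_sub]
  have hb_eq : b = re + Complex.I • im := by
    rw [hre, him, smul_smul]
    rw [show Complex.I * (2 * Complex.I)⁻¹ = (2 : ℂ)⁻¹ by
      field_simp [Complex.I_ne_zero]]
    rw [← smul_add]
    rw [show b + star b + (b - star b) = (2 : ℂ) • b by push_cast; rw [two_smul]; abel]
    rw [smul_smul]
    norm_num
  have hnre : ‖re‖ ≤ ‖b‖ := by
    rw [hre, norm_smul]
    calc ‖(2:ℂ)⁻¹‖ * ‖b + star b‖ ≤ ‖(2:ℂ)⁻¹‖ * (‖b‖ + ‖star b‖) := by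
          gcongr; exact norm_add_le _ _
      _ = ‖b‖ := by rw [norm_star]; norm_num; ring
  have hnim : ‖im‖ ≤ ‖b‖ := by
    rw [him, norm_smul]
    calc ‖(2 * Complex.I : ℂ)⁻¹‖ * ‖b - star b‖ ≤ ‖(2 * Complex.I:ℂ)⁻¹‖ * (‖b‖ + ‖star b‖) := by
          gcongr; exact norm_sub_le _ _
      _ = ‖b‖ := by rw [norm_star]; simp [norm_inv]; ring
  calc ‖E b‖ = ‖E re + Complex.I • E im‖ := by conv_lhs => rw [hb_eq, map_add, map_smul]
    _ ≤ ‖E re‖ + ‖Complex.I • E im‖ := norm_add_le _ _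
    _ ≤ 3 * ‖re‖ + ‖E im‖ := by
        refine add_le_add (hE.norm_le_sa re hre_sa) ?_
        rw [norm_smul]; simp
    _ ≤ 3 * ‖b‖ + 3 * ‖b‖ := by
        refine add_le_add (by gcongr) ((hE.norm_le_sa im him_sa).trans (by gcongr))
    _ = 6 * ‖b‖ := by ring

theorem IsCondExp.isClosed (hE : IsCondExp A E) : IsClosed (A : Set B) := by
  have h : (A : Set B) = {b | E b = b} := by
    ext b
    constructor
    · intro hb; exact hE.2.1 b hb
    · intro hb; rw [← hb]; exact hE.1 b
  rw [h]
  exact isClosed_eq hE.continuous continuous_id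

end Cont

end AuxCondExp


section Key
variable {𝒜 : Type*} [CStarAlgebra 𝒜]

theorem key_conj_sum_one {q s : 𝒜} (l : List (𝒜 × 𝒜))
    (hq : q * q = q) (hqs : star q = q)
    (hs : s = (l.map fun x => x.1 * q * x.2).sum)
    (hnorm : ‖1 - s‖ < 1 / 2) :
    ∃ z : List 𝒜, (z.map fun c => c * q * star c).sum = 1 := by
  rcases subsingleton_or_nontrivial 𝒜 with hsub | hnt
  · exact ⟨[], Subsingleton.elim _ _⟩
  letI := CStarAlgebra.spectralOrder 𝒜
  haveI := CStarAlgebra.spectralOrderedRing 𝒜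
  have sqpos : ∀ c : 𝒜, 0 ≤ c * q * star c := by
    intro c
    have h1 : c * q * star c = (c * q) * star (c * q) := by
      rw [star_mul, hqs]
      nth_rewrite 1 [← hq]
      simp [mul_assoc]
    rw [h1]
    exact mul_star_self_nonneg _
  have term_le : ∀ a b : 𝒜,
      a * q * b + star (a * q * b) ≤ (a + star b) * q * star (a + star b) := by
    intro a b
    have expand : (a + star b) * q * star (a + star b)
        = (a * q * b + star (a * q * b)) + (a * q * star a + star b * q * star (star b)) := by
      simp only [star_add, star_mul, star_star, hqs]
      noncomm_ring
    rw [expand]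
    have : (0 : 𝒜) ≤ a * q * star a + star b * q * star (star b) :=
      add_nonneg (sqpos a) (sqpos (star b))
    exact le_add_of_nonneg_right this
  obtain ⟨lK, hlK⟩ : ∃ lK : List 𝒜, lK = l.map fun x => x.1 + star x.2 := ⟨_, rfl⟩
  obtain ⟨K, hK⟩ : ∃ K : 𝒜, K = (lK.map fun c => c * q * star c).sum := ⟨_, rfl⟩
  have main : ∀ L : List (𝒜 × 𝒜),
      (L.map fun x => x.1 * q * x.2).sum + star (L.map fun x => x.1 * q * x.2).sum
        ≤ ((L.map fun x => x.1 + star x.2).map fun c => c * q * star c).sum := by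
    intro L
    induction L with
    | nil => simp
    | cons x L ih =>
        simp only [List.map_cons, List.sum_cons, star_add]
        calc x.1 * q * x.2 + (L.map fun x => x.1 * q * x.2).sum
              + (star (x.1 * q * x.2) + star (L.map fun x => x.1 * q * x.2).sum)
            = (x.1 * q * x.2 + star (x.1 * q * x.2))
              + ((L.map fun x => x.1 * q * x.2).sum
                 + star (L.map fun x => x.1 * q * x.2).sum) := by abel
          _ ≤ _ := add_le_add (by simpa using term_le x.1 x.2) ih
  have hssK : s + star s ≤ K := by rw [hs, hK, hlK]; exact main l
  have ht_sa : IsSelfAdjoint ((1 - s) + star (1 - s)) := by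
    rw [IsSelfAdjoint, star_add, star_star, add_comm]
  have ht1 : (1 - s) + star (1 - s) ≤ 1 := by
    have := le_algebraMap_of_spectrum_le (R := ℝ) (a := (1 - s) + star (1 - s)) (r := 1)
      (fun x hx => by
        calc x ≤ ‖x‖ := Real.le_norm_self x
          _ ≤ ‖(1 - s) + star (1 - s)‖ := spectrum.norm_le_norm_of_mem hx
          _ ≤ ‖1 - s‖ + ‖star (1 - s)‖ := norm_add_le _ _
          _ = 2 * ‖1 - s‖ := by rw [norm_star]; ring
          _ ≤ 1 := by linarith) ht_sa
    rwa [map_one] at this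
  have h1ss : (1 : 𝒜) ≤ s + star s := by
    have h2 : s + star s = 2 - ((1 - s) + star (1 - s)) := by
      rw [star_sub, star_one, show (2:𝒜) = 1 + 1 from one_add_one_eq_two.symm]
      abel
    rw [h2]
    calc (1 : 𝒜) = 2 - 1 := by norm_num
      _ ≤ 2 - ((1 - s) + star (1 - s)) := sub_le_sub_left ht1 2
  have hK1 : (1 : 𝒜) ≤ K := le_trans h1ss hssK
  have hKsa : IsSelfAdjoint K := IsSelfAdjoint.of_nonneg (zero_le_one.trans hK1)
  have hspec : ∀ x ∈ spectrum ℝ K, (1 : ℝ) ≤ x := (CFC.one_le_iff (R := ℝ) K hKsa).mp hK1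
  obtain ⟨f, hf⟩ : ∃ f : ℝ → ℝ, f = fun x : ℝ => (Real.sqrt x)⁻¹ := ⟨_, rfl⟩
  have hfc : ContinuousOn f (spectrum ℝ K) := by
    rw [hf]
    exact Real.continuous_sqrt.continuousOn.inv₀ fun x hx =>
      (Real.sqrt_pos.mpr (by linarith [hspec x hx])).ne'
  obtain ⟨c, hc⟩ : ∃ c : 𝒜, c = cfc f K := ⟨_, rfl⟩
  have hc_sa : IsSelfAdjoint c := hc ▸ cfc_predicate f K
  have hcKc : c * K * c = 1 := by
    rw [hc]
    nth_rewrite 2 [← cfc_id ℝ K hKsa]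
    rw [← cfc_mul f id K hfc continuousOn_id,
        ← cfc_mul (fun x => f x * id x) f K (hfc.mul continuousOn_id) hfc]
    have : cfc (fun x => f x * id x * f x) K = cfc (fun _ : ℝ => (1 : ℝ)) K := by
      refine cfc_congr fun x hx => ?_
      have h1x := hspec x hx
      have h0x : (0:ℝ) ≤ x := by linarith
      have hsq : Real.sqrt x ≠ 0 := (Real.sqrt_pos.mpr (by linarith)).ne'
      rw [hf]
      simp only [id]
      rw [show (Real.sqrt x)⁻¹ * x * (Real.sqrt x)⁻¹
            = x / (Real.sqrt x * Real.sqrt x) by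
              field_simp,
          Real.mul_self_sqrt h0x]
      exact div_self (by linarith)
    rw [this]
    rw [show (fun _ : ℝ => (1:ℝ)) = (1 : ℝ → ℝ) from rfl, cfc_one ℝ K]
  refine ⟨lK.map fun e => c * e, ?_⟩
  rw [List.map_map]
  have hfun : ((fun d => d * q * star d) ∘ fun e => c * e)
      = fun e => c * ((fun e' => e' * q * star e' * c) e) := by
    funext e
    simp only [Function.comp]
    rw [star_mul, hc_sa.star_eq]
    noncomm_ring
  rw [hfun, List.sum_map_mul_left, List.sum_map_mul_right, ← hK]
  rw [← mul_assoc, hcKc]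
end Key




theorem approx_one (B : Type*) [CStarAlgebra B] (A : StarSubalgebra ℂ B)
    (hA : IsSimpleCStar A)
    (p : B) (hpA : p ∈ A) (hp0 : p ≠ 0) :
    ∃ (s : B) (l : List (B × B)), (∀ x ∈ l, x.1 ∈ A ∧ x.2 ∈ A) ∧
      s = (l.map fun x => x.1 * p * x.2).sum ∧ ‖1 - s‖ < 1 / 2 := by
  classical
  set G : Set B := {x | ∃ a ∈ A, ∃ b ∈ A, x = a * p * b} with hG
  set T : Submodule ℂ B := Submodule.span ℂ G with hT
  set C : Set B := closure (T : Set B) with hC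
  -- multiplication stability
  have hml : ∀ a ∈ A, ∀ t ∈ T, a * t ∈ T := by
    intro a ha t ht
    induction ht using Submodule.span_induction with
    | mem x hx =>
        obtain ⟨a', ha', b', hb', rfl⟩ := hx
        exact Submodule.subset_span ⟨a * a', mul_mem ha ha', b', hb', by noncomm_ring⟩
    | zero => simpa using T.zero_mem
    | add x y _ _ ihx ihy => rw [mul_add]; exact T.add_mem ihx ihy
    | smul c x _ ihx => rw [mul_smul_comm]; exact T.smul_mem c ihx
  have hmr : ∀ a ∈ A, ∀ t ∈ T, t * a ∈ T := by
    intro a ha t ht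
    induction ht using Submodule.span_induction with
    | mem x hx =>
        obtain ⟨a', ha', b', hb', rfl⟩ := hx
        exact Submodule.subset_span ⟨a', ha', b' * a, mul_mem hb' ha, by noncomm_ring⟩
    | zero => simpa using T.zero_mem
    | add x y _ _ ihx ihy => rw [add_mul]; exact T.add_mem ihx ihy
    | smul c x _ ihx => rw [smul_mul_assoc]; exact T.smul_mem c ihx
  have hmlC : ∀ a ∈ A, ∀ t ∈ C, a * t ∈ C := fun a ha t ht =>
    map_mem_closure (f := (a * ·)) (continuous_mul_left a) ht fun x hx => hml a ha x hx
  have hmrC : ∀ a ∈ A, ∀ t ∈ C, t * a ∈ C := fun a ha t ht =>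
    map_mem_closure (f := (· * a)) (continuous_mul_right a) ht fun x hx => hmr a ha x hx
  have haddC : ∀ x ∈ C, ∀ y ∈ C, x + y ∈ C := fun x hx y hy =>
    map_mem_closure₂ continuous_add hx hy fun a ha b hb => T.add_mem ha hb
  have hnegC : ∀ x ∈ C, -x ∈ C := fun x hx =>
    map_mem_closure continuous_neg hx fun a ha => T.neg_mem ha
  have h0C : (0 : B) ∈ C := subset_closure T.zero_mem
  -- the two-sided ideal in ↥A
  set I : TwoSidedIdeal ↥A := TwoSidedIdeal.mk' (Subtype.val ⁻¹' C)
    (by simpa using h0C)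
    (fun {x y} hx hy => by
      simp only [Set.mem_preimage] at *
      push_cast
      exact haddC _ hx _ hy)
    (fun {x} hx => by
      simp only [Set.mem_preimage] at *
      push_cast
      exact hnegC _ hx)
    (fun {x y} hy => by
      simp only [Set.mem_preimage] at *
      push_cast
      exact hmlC _ x.2 _ hy)
    (fun {x y} hx => by
      simp only [Set.mem_preimage] at *
      push_cast
      exact hmrC _ y.2 _ hx) with hI
  have hIC : IsClosed (I : Set ↥A) := by
    rw [hI, TwoSidedIdeal.coe_mk']
    exact (isClosed_closure).preimage continuous_subtype_val
  have hIne : I ≠ ⊥ := by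
    intro h
    have hpI : (⟨p, hpA⟩ : ↥A) ∈ I := by
      rw [hI, TwoSidedIdeal.mem_mk']
      simp only [Set.mem_preimage]
      exact subset_closure (Submodule.subset_span ⟨1, one_mem A, 1, one_mem A, by simp⟩)
    rw [h, TwoSidedIdeal.mem_bot] at hpI
    exact hp0 (congrArg Subtype.val hpI)
  have hItop : I = ⊤ := (hA I hIC).resolve_left hIne
  have h1C : (1 : B) ∈ C := by
    have : (⟨1, one_mem A⟩ : ↥A) ∈ I := by rw [hItop]; exact TwoSidedIdeal.mem_top _
    rw [hI, TwoSidedIdeal.mem_mk'] at this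
    simpa using this
  -- approximate 1
  obtain ⟨s, hsT, hsnorm⟩ : ∃ s ∈ (T : Set B), ‖1 - s‖ < 1 / 2 := by
    rw [hC, Metric.mem_closure_iff] at h1C
    obtain ⟨s, hsT, hd⟩ := h1C (1 / 2) (by norm_num)
    exact ⟨s, hsT, by rwa [dist_eq_norm] at hd⟩
  -- representation as a list
  have rep : ∀ s ∈ T, ∃ l : List (B × B), (∀ x ∈ l, x.1 ∈ A ∧ x.2 ∈ A) ∧
      s = (l.map fun x => x.1 * p * x.2).sum := by
    intro s hs
    induction hs using Submodule.span_induction with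
    | mem x hx =>
        obtain ⟨a, ha, b, hb, rfl⟩ := hx
        exact ⟨[(a, b)], by simp [ha, hb], by simp⟩
    | zero => exact ⟨[], by simp, by simp⟩
    | add x y _ _ ihx ihy =>
        obtain ⟨l1, h1, e1⟩ := ihx
        obtain ⟨l2, h2, e2⟩ := ihy
        refine ⟨l1 ++ l2, ?_, ?_⟩
        · intro x hx
          rcases List.mem_append.mp hx with h | h
          exacts [h1 x h, h2 x h]
        · rw [List.map_append, List.sum_append, e1, e2]
    | smul c x _ ihx =>
        obtain ⟨l1, h1, e1⟩ := ihx
        refine ⟨l1.map fun y => (c • y.1, y.2), ?_, ?_⟩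
        · intro x hx
          obtain ⟨y, hy, rfl⟩ := List.mem_map.mp hx
          exact ⟨SMulMemClass.smul_mem c (h1 y hy).1, (h1 y hy).2⟩
        · rw [List.map_map, e1]
          have h2 : ((fun x : B × B => x.1 * p * x.2) ∘ fun y : B × B => (c • y.1, y.2))
              = (fun z : B => c • z) ∘ (fun y : B × B => y.1 * p * y.2) := by
            funext y
            simp [Function.comp, smul_mul_assoc]
          rw [h2, ← List.map_map]
          exact map_list_sum (DistribMulAction.toAddMonoidHom B c) _
  obtain ⟨l, hl, hsl⟩ := rep s hsT
  exact ⟨s, l, hl, hsl, hsnorm⟩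



section Test
variable {B : Type*} [CStarAlgebra B] (A : StarSubalgebra ℂ B)


theorem final_calc (E : B →ₗ[ℂ] B)
    (hbimod : ∀ a ∈ A, ∀ b : B, ∀ c ∈ A, E (a * b * c) = a * E b * c)
    (p : B) (hpA : p ∈ A) (hp : p * p = p) (hps : star p = p)
    {n : ℕ} (v : Fin n → B) (hv : IsQuasiBasis E v)
    {M : ℕ} (Z : Fin M → B) (hZA : ∀ k, Z k ∈ A)
    (hsum1 : ∑ k, Z k * p * star (Z k) = 1) :
    ∃ (m : ℕ) (w : Fin m → B), (∀ i, p * w i * p = w i) ∧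
      ∀ b : B, p * b * p = b →
        (∑ i, w i * E (star (w i) * b) = b) ∧ (∑ i, E (b * w i) * star (w i) = b) := by
  have hpp : ∀ x : B, p * (p * x) = p * x := fun x => by rw [← mul_assoc, hp]
  refine ⟨n * M, fun j => p * v (finProdFinEquiv.symm j).1 * Z (finProdFinEquiv.symm j).2 * p,
    fun j => ?_, fun b hb => ?_⟩
  · simp only [← mul_assoc]
    rw [hp, mul_assoc, hp]
  have hpb : p * b = b := by
    conv_lhs => rw [← hb]
    simp only [← mul_assoc]
    rw [hp]
    exact hb
  have hbp : b * p = b := by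
    conv_lhs => rw [← hb]
    rw [mul_assoc, hp]
    exact hb
  have hbp' : ∀ x : B, b * (p * x) = b * x := fun x => by rw [← mul_assoc, hbp]
  constructor
  · calc ∑ j : Fin (n * M), (fun x : Fin n × Fin M =>
          (p * v x.1 * Z x.2 * p) * E (star (p * v x.1 * Z x.2 * p) * b)) (finProdFinEquiv.symm j)
        = ∑ x : Fin n × Fin M,
            (p * v x.1 * Z x.2 * p) * E (star (p * v x.1 * Z x.2 * p) * b) :=
          Equiv.sum_comp finProdFinEquiv.symm (fun x : Fin n × Fin M =>
            (p * v x.1 * Z x.2 * p) * E (star (p * v x.1 * Z x.2 * p) * b))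
      _ = ∑ i : Fin n, ∑ k : Fin M,
            (p * v i * Z k * p) * E (star (p * v i * Z k * p) * b) := Fintype.sum_prod_type _
      _ = ∑ i : Fin n, p * (v i * E (star (v i) * b)) := by
          refine Finset.sum_congr rfl fun i _ => ?_
          calc ∑ k : Fin M, (p * v i * Z k * p) * E (star (p * v i * Z k * p) * b)
              = ∑ k : Fin M, (p * v i) * ((Z k * p * star (Z k)) * E (star (v i) * b)) := by
                refine Finset.sum_congr rfl fun k _ => ?_
                have h1 : star (p * v i * Z k * p) * b
                    = (p * star (Z k)) * (star (v i) * b) * 1 := by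
                  simp only [star_mul, hps, mul_one, mul_assoc, hpb]
                rw [h1, hbimod (p * star (Z k)) (mul_mem hpA (star_mem (hZA k)))
                  (star (v i) * b) 1 (one_mem A)]
                simp only [mul_one, mul_assoc, hpp]
            _ = (p * v i) * (∑ k : Fin M, (Z k * p * star (Z k)) * E (star (v i) * b)) := by
                rw [← Finset.mul_sum]
            _ = (p * v i) * ((∑ k : Fin M, Z k * p * star (Z k)) * E (star (v i) * b)) := by
                rw [← Finset.sum_mul]
            _ = p * (v i * E (star (v i) * b)) := by rw [hsum1, one_mul, mul_assoc]
      _ = p * ∑ i : Fin n, v i * E (star (v i) * b) := (Finset.mul_sum _ _ _).symm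
      _ = b := by rw [(hv b).1, hpb]
  · calc ∑ j : Fin (n * M), (fun x : Fin n × Fin M =>
          E (b * (p * v x.1 * Z x.2 * p)) * star (p * v x.1 * Z x.2 * p)) (finProdFinEquiv.symm j)
        = ∑ x : Fin n × Fin M,
            E (b * (p * v x.1 * Z x.2 * p)) * star (p * v x.1 * Z x.2 * p) :=
          Equiv.sum_comp finProdFinEquiv.symm (fun x : Fin n × Fin M =>
            E (b * (p * v x.1 * Z x.2 * p)) * star (p * v x.1 * Z x.2 * p))
      _ = ∑ i : Fin n, ∑ k : Fin M,
            E (b * (p * v i * Z k * p)) * star (p * v i * Z k * p) := Fintype.sum_prod_type _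
      _ = ∑ i : Fin n, (E (b * v i) * star (v i)) * p := by
          refine Finset.sum_congr rfl fun i _ => ?_
          calc ∑ k : Fin M, E (b * (p * v i * Z k * p)) * star (p * v i * Z k * p)
              = ∑ k : Fin M, (E (b * v i)) * ((Z k * p * star (Z k)) * (star (v i) * p)) := by
                refine Finset.sum_congr rfl fun k _ => ?_
                have h1 : b * (p * v i * Z k * p) = 1 * (b * v i) * (Z k * p) := by
                  simp only [one_mul, mul_assoc, hbp']
                rw [h1, hbimod 1 (one_mem A) (b * v i) (Z k * p) (mul_mem (hZA k) hpA)]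
                simp only [star_mul, hps, one_mul, mul_assoc, hpp]
            _ = E (b * v i) * (∑ k : Fin M, (Z k * p * star (Z k)) * (star (v i) * p)) := by
                rw [← Finset.mul_sum]
            _ = E (b * v i) * ((∑ k : Fin M, Z k * p * star (Z k)) * (star (v i) * p)) := by
                rw [← Finset.sum_mul]
            _ = (E (b * v i) * star (v i)) * p := by rw [hsum1, one_mul, mul_assoc]
      _ = (∑ i : Fin n, E (b * v i) * star (v i)) * p := (Finset.sum_mul _ _ _).symm
      _ = b := by rw [(hv b).2, hbp]
end Test


/-- If `E : B → A` is a faithful conditional expectation of index-finite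
type and `A` is simple, then for every non-zero projection `p ∈ A` the restriction
`F_p = E|_{pBp} : pBp → pAp` is of index-finite type, i.e. admits a quasi-basis
consisting of elements of the corner `pBp`. -/
theorem stmt_8 {B : Type*} [CStarAlgebra B] (A : StarSubalgebra ℂ B) (E : B →ₗ[ℂ] B)
    (hE : IsCondExp A E) (hf : IsFaithful E)
    (hfin : ∃ (n : ℕ) (v : Fin n → B), IsQuasiBasis E v)
    (hA : IsSimpleCStar A)
    (p : B) (hpA : p ∈ A) (hp : p * p = p) (hps : star p = p) (hp0 : p ≠ 0) :
    ∃ (m : ℕ) (w : Fin m → B), (∀ i, p * w i * p = w i) ∧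
      ∀ b : B, p * b * p = b →
        (∑ i, w i * E (star (w i) * b) = b) ∧ (∑ i, E (b * w i) * star (w i) = b) := by
  classical
  haveI : Nontrivial B := nontrivial_of_ne p 0 hp0
  obtain ⟨n, v, hv⟩ := hfin
  obtain ⟨s, l, hl, hsl, hsnorm⟩ := approx_one B A hA p hpA hp0
  haveI hAc : IsClosed (A : Set B) := hE.isClosed
  letI : CStarAlgebra ↥A := StarSubalgebra.cstarAlgebra A
  set q : ↥A := ⟨p, hpA⟩ with hqdef
  have coe_mul : ∀ x y : ↥A, ((x * y : ↥A) : B) = (x : B) * y := fun _ _ => rfl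
  have coe_star : ∀ x : ↥A, ((star x : ↥A) : B) = star (x : B) := fun _ => rfl
  have coe_add : ∀ x y : ↥A, ((x + y : ↥A) : B) = (x : B) + y := fun _ _ => rfl
  have coe_sub : ∀ x y : ↥A, ((x - y : ↥A) : B) = (x : B) - y := fun _ _ => rfl
  have coe_one : ((1 : ↥A) : B) = 1 := rfl
  have coe_zero : ((0 : ↥A) : B) = 0 := rfl
  have hq : q * q = q := Subtype.ext (by rw [coe_mul]; exact hp)
  have hqs : star q = q := Subtype.ext (by rw [coe_star]; exact hps)
  have lift : ∀ L : List (B × B), (∀ x ∈ L, x.1 ∈ A ∧ x.2 ∈ A) →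
      ∃ L' : List (↥A × ↥A),
        (((L'.map fun y => y.1 * q * y.2).sum : ↥A) : B)
          = (L.map fun x => x.1 * p * x.2).sum := by
    intro L hL
    induction L with
    | nil => exact ⟨[], by simpa using coe_zero⟩
    | cons x L ih =>
        obtain ⟨L', hL'⟩ := ih fun y hy => hL y (List.mem_cons_of_mem x hy)
        obtain ⟨hx1, hx2⟩ := hL x (List.mem_cons_self)
        refine ⟨(⟨x.1, hx1⟩, ⟨x.2, hx2⟩) :: L', ?_⟩
        simp only [List.map_cons, List.sum_cons]
        rw [coe_add, coe_mul, coe_mul, hL']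
  obtain ⟨l', hl'⟩ := lift l hl
  have hnorm' : ‖(1 : ↥A) - (l'.map fun y => y.1 * q * y.2).sum‖ < 1 / 2 := by
    have hcoe : (((1 : ↥A) - (l'.map fun y => y.1 * q * y.2).sum : ↥A) : B) = 1 - s := by
      rw [coe_sub, coe_one, hl', hsl]
    calc ‖(1 : ↥A) - (l'.map fun y => y.1 * q * y.2).sum‖
        = ‖(((1 : ↥A) - (l'.map fun y => y.1 * q * y.2).sum : ↥A) : B)‖ := rfl
      _ = ‖1 - s‖ := by rw [hcoe]
      _ < 1 / 2 := hsnorm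
  obtain ⟨z, hz⟩ := key_conj_sum_one (q := q) l' hq hqs rfl hnorm'
  set zB : List B := z.map Subtype.val with hzB
  have hpush : ∀ Y : List ↥A, (((Y.map fun c => c * q * star c).sum : ↥A) : B)
      = ((Y.map Subtype.val).map fun c => c * p * star c).sum := by
    intro Y
    induction Y with
    | nil => simpa using coe_zero
    | cons a Y ih =>
        simp only [List.map_cons, List.sum_cons]
        rw [coe_add, coe_mul, coe_mul, coe_star, ih]
  have hzB1 : (zB.map fun c => c * p * star c).sum = 1 := by
    rw [hzB, ← hpush z, hz]
    exact coe_one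
  have hzBA : ∀ c ∈ zB, c ∈ A := by
    intro c hc
    rw [hzB] at hc
    obtain ⟨a, _, rfl⟩ := List.mem_map.mp hc
    exact a.2
  obtain ⟨Z, hZdef⟩ : ∃ Z : Fin zB.length → B, Z = fun k : Fin zB.length => zB[(k : ℕ)]'k.isLt := ⟨_, rfl⟩
  have hZA : ∀ k, Z k ∈ A := fun k => by
    rw [hZdef]; exact hzBA _ (List.getElem_mem k.isLt)
  have hsum1 : ∑ k, Z k * p * star (Z k) = 1 := by
    rw [hZdef]
    rw [show (∑ k : Fin zB.length, zB[(k : ℕ)]'k.isLt * p * star (zB[(k : ℕ)]'k.isLt))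
        = (zB.map fun c => c * p * star c).sum from Fin.sum_univ_fun_getElem zB (fun c => c * p * star c)]
    exact hzB1
  exact final_calc A E hE.2.2.1 p hpA hp hps v hv Z hZA hsum1
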